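/- For all n, p ∈ ℕ, the series Σ_{k=0}^{∞} π_n(k) π_p(k) w(k) converges and equals 1/γ_n² if n = p, and equals 0 if n ≠ p. -/

import Mathlib

open Complex Finset Filter Topology

/-- Pochhammer symbol `(a)_k = a (a+1) ⋯ (a+k-1)`. -/
noncomputable def poch (a : ℂ) (k : ℕ) : ℂ := ∏ i ∈ Finset.range k, (a + i)

/-- The Meixner polynomial `m_n(z; β, c)`. -/
noncomputable def meixner (β c : ℝ) (n : ℕ) (z : ℂ) : ℂ :=
  poch (β : ℂ) n * ∑ k ∈ Finset.range (n + 1),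
    poch (-(n : ℂ)) k * poch (-z) k / (poch (β : ℂ) k * (Nat.factorial k : ℂ))
      * (1 - 1 / (c : ℂ)) ^ k

/-- The monic Meixner polynomial `π_n(z) := (1 − 1/c)^{−n} m_n(z; β, c)`. -/
noncomputable def meixnerMonic (β c : ℝ) (n : ℕ) (z : ℂ) : ℂ :=
  (1 - 1 / (c : ℂ)) ^ (-(n : ℤ)) * meixner β c n z

/-- The weight `w(x) := Γ(x+β) cˣ / Γ(x+1)`. -/
noncomputable def weight (β c : ℝ) (s : ℂ) : ℂ :=
  Complex.Gamma (s + (β : ℂ)) * (c : ℂ) ^ s / Complex.Gamma (s + 1)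

/-- `γ_n² := (1−c)^{2n+β} c^{−n} / (Γ(n+β) Γ(n+1))`. -/
noncomputable def gammaSq (β c : ℝ) (n : ℕ) : ℝ :=
  (1 - c) ^ (2 * (n : ℝ) + β) * c ^ (-(n : ℤ)) / (Real.Gamma ((n : ℝ) + β) * Real.Gamma ((n : ℝ) + 1))


noncomputable def pochR (a : ℝ) (k : ℕ) : ℝ := ∏ i ∈ Finset.range k, (a + i)

lemma poch_zero (a : ℂ) : poch a 0 = 1 := by simp [poch]

lemma poch_succ (a : ℂ) (k : ℕ) : poch a (k + 1) = poch a k * (a + k) := by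
  simp [poch, Finset.prod_range_succ]

lemma pochR_succ (a : ℝ) (k : ℕ) : pochR a (k + 1) = pochR a k * (a + k) := by
  simp [pochR, Finset.prod_range_succ]

lemma poch_ofReal (a : ℝ) (k : ℕ) : poch (a : ℂ) k = ((pochR a k : ℝ) : ℂ) := by
  simp [poch, pochR]

lemma pochR_pos {a : ℝ} (ha : 0 < a) (k : ℕ) : 0 < pochR a k := by
  apply Finset.prod_pos
  intro i _
  positivity

lemma poch_add (a : ℂ) (m k : ℕ) : poch a (m + k) = poch a m * poch (a + m) k := by
  induction k with
  | zero => simp [poch_zero]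
  | succ k ih =>
      rw [← Nat.add_assoc, poch_succ, ih, poch_succ]
      push_cast
      ring

lemma pochR_gamma {a : ℝ} (ha : 0 < a) (k : ℕ) :
    Real.Gamma (a + k) = Real.Gamma a * pochR a k := by
  induction k with
  | zero => simp [pochR]
  | succ k ih =>
      have h1 : a + (k + 1 : ℕ) = (a + k) + 1 := by push_cast; ring
      rw [h1, Real.Gamma_add_one (by positivity), ih, pochR_succ]
      ring

/-- The real binomial series. -/
lemma hasSum_binomial {a c : ℝ} (ha : 0 < a) (hc0 : 0 < c) (hc1 : c < 1) :
    HasSum (fun k : ℕ => pochR a k * c ^ k / (Nat.factorial k : ℝ)) ((1 - c) ^ (-a)) := by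
  set r : ℝ := 1 - c with hr
  have hrpos : 0 < r := by simp [hr]; linarith
  have hGa : 0 < Real.Gamma a := Real.Gamma_pos_of_pos ha
  -- the summand times `Gamma a`
  set I : ℕ → ℝ := fun k => Real.Gamma (a + k) * c ^ k / (Nat.factorial k : ℝ) with hI
  have hInonneg : ∀ k, 0 ≤ I k := by
    intro k
    have := Real.Gamma_pos_of_pos (show (0:ℝ) < a + k by positivity)
    positivity
  -- the integrand family
  set f : ℕ → ℝ → ℝ := fun k x => (Real.exp (-x) * x ^ (a + k - 1)) * (c ^ k / (Nat.factorial k : ℝ))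
    with hf
  have hfint : ∀ k, MeasureTheory.IntegrableOn (f k) (Set.Ioi 0) := by
    intro k
    exact (Real.GammaIntegral_convergent (show (0:ℝ) < a + k by positivity)).mul_const _
  have hfval : ∀ k, ∫ x in Set.Ioi 0, f k x = I k := by
    intro k
    rw [hf, hI]
    simp only
    rw [MeasureTheory.integral_mul_const, ← Real.Gamma_eq_integral
      (show (0:ℝ) < a + k by positivity)]
    ring
  -- the limit integrand
  set g : ℝ → ℝ := fun x => x ^ (a - 1) * Real.exp (-(r * x)) with hg
  have hgint : MeasureTheory.IntegrableOn g (Set.Ioi 0) := by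
    have h1 : MeasureTheory.IntegrableOn
        (fun x : ℝ => Real.exp (-(r * x)) * (r * x) ^ (a - 1)) (Set.Ioi 0) := by
      have := (MeasureTheory.integrableOn_Ioi_comp_mul_left_iff
        (fun x : ℝ => Real.exp (-x) * x ^ (a - 1)) 0 hrpos).2 ?_
      · simpa using this
      · simpa using Real.GammaIntegral_convergent ha
    have h2 := h1.mul_const (r ^ (1 - a))
    apply MeasureTheory.IntegrableOn.congr_fun h2 ?_ measurableSet_Ioi
    intro x hx
    simp only [Set.mem_Ioi] at hx
    rw [hg]
    simp only
    rw [Real.mul_rpow hrpos.le hx.le]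
    have h3 : r ^ (a - 1) * r ^ (1 - a) = 1 := by
      rw [← Real.rpow_add hrpos]; simp
    calc Real.exp (-(r * x)) * (r ^ (a-1) * x ^ (a-1)) * r ^ (1-a)
        = x ^ (a - 1) * Real.exp (-(r * x)) * (r ^ (a-1) * r ^ (1-a)) := by ring
      _ = x ^ (a - 1) * Real.exp (-(r * x)) := by rw [h3, mul_one]
  have hgval : ∫ x in Set.Ioi 0, g x = (1 / r) ^ a * Real.Gamma a :=
    Real.integral_rpow_mul_exp_neg_mul_Ioi ha hrpos
  have hfmeas : ∀ k : ℕ, Measurable (f k) := by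
    intro k
    rw [hf]
    fun_prop
  have hfnonneg : ∀ (k : ℕ) (x : ℝ), 0 < x → 0 ≤ f k x := by
    intro k x hx
    have h1 : (0:ℝ) ≤ x ^ (a + k - 1) := Real.rpow_nonneg hx.le _
    have h2 : (0:ℝ) ≤ Real.exp (-x) := (Real.exp_pos _).le
    positivity
  have hptsum : ∀ x : ℝ, 0 < x → HasSum (fun k => f k x) (g x) := by
    intro x hx
    have he : HasSum (fun k : ℕ => (c * x) ^ k / (Nat.factorial k : ℝ)) (Real.exp (c * x)) := by
      rw [Real.exp_eq_exp_ℝ]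
      exact NormedSpace.expSeries_div_hasSum_exp (c * x)
    have := he.mul_left (Real.exp (-x) * x ^ (a - 1))
    have heq : (fun k : ℕ => (Real.exp (-x) * x ^ (a - 1)) * ((c * x) ^ k / (Nat.factorial k : ℝ)))
        = fun k => f k x := by
      funext k
      rw [hf]
      simp only
      rw [show a + k - 1 = (a - 1) + k by ring, Real.rpow_add hx, Real.rpow_natCast,
        mul_pow]
      field_simp
    rw [heq] at this
    convert this using 1
    · rfl
    rw [hg]
    simp only
    rw [show -(r*x) = c*x + -x by rw [hr]; ring, Real.exp_add]
    ring
  -- pass to ℝ≥0∞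
  have hfae : ∀ k : ℕ, (0:ℝ → ℝ) ≤ᵐ[MeasureTheory.volume.restrict (Set.Ioi 0)] f k := by
    intro k
    filter_upwards [MeasureTheory.ae_restrict_mem measurableSet_Ioi] with x hx
    exact hfnonneg k x hx
  have key : ∑' k : ℕ, ENNReal.ofReal (I k) = ENNReal.ofReal ((1 / r) ^ a * Real.Gamma a) := by
    have step1 : ∀ k : ℕ, ENNReal.ofReal (I k)
        = ∫⁻ x in Set.Ioi 0, ENNReal.ofReal (f k x) := by
      intro k
      rw [← hfval k]
      exact MeasureTheory.ofReal_integral_eq_lintegral_ofReal (hfint k) (hfae k)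
    simp_rw [step1]
    rw [← MeasureTheory.lintegral_tsum (fun k => ((hfmeas k).ennreal_ofReal).aemeasurable)]
    have step2 : ∫⁻ x in Set.Ioi 0, ∑' k : ℕ, ENNReal.ofReal (f k x)
        = ∫⁻ x in Set.Ioi 0, ENNReal.ofReal (g x) := by
      apply MeasureTheory.setLIntegral_congr_fun measurableSet_Ioi
      intro x hx
      simp only
      rw [← ENNReal.ofReal_tsum_of_nonneg (fun k => hfnonneg k x hx) (hptsum x hx).summable,
        (hptsum x hx).tsum_eq]
    rw [step2, ← hgval]
    exact (MeasureTheory.ofReal_integral_eq_lintegral_ofReal hgint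
      ((MeasureTheory.ae_restrict_iff' measurableSet_Ioi).2
        (Filter.Eventually.of_forall fun x hx => by
          have h1 : (0:ℝ) ≤ x ^ (a - 1) := Real.rpow_nonneg (le_of_lt hx) _
          have h2 : (0:ℝ) ≤ Real.exp (-(r * x)) := (Real.exp_pos _).le
          exact mul_nonneg h1 h2))).symm
  have hsummI : Summable I := by
    have h1 : (∑' k : ℕ, ENNReal.ofReal (I k)) ≠ ⊤ := by
      rw [key]; exact ENNReal.ofReal_ne_top
    have := ENNReal.summable_toReal h1
    refine this.congr fun k => ?_
    rw [ENNReal.toReal_ofReal (hInonneg k)]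
  have htsumI : ∑' k, I k = (1 / r) ^ a * Real.Gamma a := by
    have h2 := congrArg ENNReal.toReal key
    rw [ENNReal.tsum_toReal_eq (fun k => ENNReal.ofReal_ne_top)] at h2
    simp_rw [ENNReal.toReal_ofReal (hInonneg _)] at h2
    rw [h2, ENNReal.toReal_ofReal]
    have : (0:ℝ) < (1 / r) ^ a := Real.rpow_pos_of_pos (by positivity) _
    positivity
  have hIsum : HasSum I ((1 / r) ^ a * Real.Gamma a) := hsummI.hasSum_iff.2 htsumI
  have hIeq : I = fun k => Real.Gamma a * (pochR a k * c ^ k / (Nat.factorial k : ℝ)) := by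
    funext k
    rw [hI]
    simp only
    rw [pochR_gamma ha]
    ring
  rw [hIeq] at hIsum
  have h3 := hIsum.mul_left (Real.Gamma a)⁻¹
  have h4 : (1/r) ^ a = r ^ (-a) := by
    rw [one_div, Real.rpow_neg hrpos.le, Real.inv_rpow hrpos.le]
  simp_rw [inv_mul_cancel_left₀ hGa.ne'] at h3
  convert h3 using 1
  · rfl
  rw [h4]
  field_simp
lemma poch_succ' (a : ℂ) (k : ℕ) : poch a (k + 1) = a * poch (a + 1) k := by
  rw [show k + 1 = 1 + k by ring, poch_add]
  simp [poch]

lemma poch_one (a : ℂ) : poch a 1 = a := by simp [poch]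

lemma poch_ne_zero_of_re_pos {a : ℂ} (ha : 0 < a.re) (k : ℕ) : poch a k ≠ 0 := by
  apply Finset.prod_ne_zero_iff.2
  intro i _
  intro h
  have : (a + i).re = 0 := by rw [h]; simp
  simp only [Complex.add_re, Complex.natCast_re] at this
  have : (0:ℝ) ≤ (i:ℝ) := by positivity
  linarith [this]

lemma poch_neg_nat (x m : ℕ) : poch (-(x:ℂ)) m = (-1)^m * (x.descFactorial m : ℂ) := by
  induction m with
  | zero => simp [poch_zero]
  | succ m ih =>
      rw [poch_succ, ih, Nat.descFactorial_succ]
      rcases le_or_gt (m+1) x with h | h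
      · have : ((x - m : ℕ) : ℂ) = (x:ℂ) - m := by
          rw [Nat.cast_sub (Nat.le_of_succ_le h)]
        push_cast
        rw [this]
        ring
      · have hz : x - m = 0 := by omega
        rw [hz]
        rcases Nat.lt_or_ge x m with h2 | h2
        · rw [Nat.descFactorial_eq_zero_iff_lt.2 h2]
          push_cast
          ring
        · have hxe : x = m := by omega
          subst hxe
          push_cast
          ring

lemma poch_neg_nat_self (n : ℕ) : poch (-(n:ℂ)) n = (-1)^n * (Nat.factorial n : ℂ) := by
  rw [poch_neg_nat, Nat.descFactorial_self]

lemma poch_neg_nat_eq_zero {k n : ℕ} (h : k < n) : poch (-(k:ℂ)) n = 0 := by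
  rw [poch_neg_nat, Nat.descFactorial_eq_zero_iff_lt.2 h]
  simp

lemma descFactorial_cast_eq (k m : ℕ) :
    ((k.descFactorial m : ℕ) : ℂ) = (-1)^m * poch (-(k:ℂ)) m := by
  rw [poch_neg_nat, ← mul_assoc, ← mul_pow]
  norm_num

lemma poch_vandermonde (a b : ℂ) (j : ℕ) :
    poch (a + b) j = ∑ i ∈ Finset.range (j + 1),
      (j.choose i : ℂ) * (poch a i * poch b (j - i)) := by
  induction j with
  | zero => simp [poch_zero]
  | succ j ih =>
      rw [poch_succ, ih, Finset.sum_choose_succ_mul (fun i m => poch a i * poch b m) j,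
        Finset.sum_mul]
      have hsplit : ∀ i ∈ Finset.range (j+1),
          (j.choose i : ℂ) * (poch a i * poch b (j - i)) * (a + b + j)
          = (j.choose i : ℂ) * (poch a i * poch b (j + 1 - i))
            + (j.choose i : ℂ) * (poch a (i+1) * poch b (j - i)) := by
        intro i hi
        rw [Finset.mem_range] at hi
        have hij : i ≤ j := by omega
        have hcast : ((j - i : ℕ) : ℂ) = (j:ℂ) - i := by rw [Nat.cast_sub hij]
        have h1 : j + 1 - i = (j - i) + 1 := by omega
        rw [h1, poch_succ, poch_succ, hcast]
        ring
      rw [Finset.sum_congr rfl hsplit, Finset.sum_add_distrib]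

lemma chu_vandermonde (b g : ℂ) (M : ℕ) :
    ∑ i ∈ Finset.range (M + 1),
      (-1)^i * (M.choose i : ℂ) * poch b i * poch (g + i) (M - i) = poch (g - b) M := by
  induction M generalizing b g with
  | zero => simp [poch_zero]
  | succ M ih =>
      have hrw : ∀ i, (-1:ℂ)^i * ((M+1).choose i : ℂ) * poch b i * poch (g + i) (M + 1 - i)
          = ((M+1).choose i : ℂ) * ((-1)^i * poch b i * poch (g+i) (M+1-i)) := by
        intro i; ring
      simp_rw [hrw]
      rw [Finset.sum_choose_succ_mul
        (fun i m => (-1:ℂ)^i * poch b i * poch (g + i) m) M]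
      have h1 : ∑ i ∈ Finset.range (M+1),
          (M.choose i : ℂ) * ((-1)^i * poch b i * poch (g + i) (M + 1 - i))
          = (g + M) * poch (g - b) M := by
        rw [← ih b g, Finset.mul_sum]
        apply Finset.sum_congr rfl
        intro i hi
        rw [Finset.mem_range] at hi
        have hij : i ≤ M := by omega
        have h2 : M + 1 - i = (M - i) + 1 := by omega
        have hcast : ((M - i : ℕ) : ℂ) = (M:ℂ) - i := by rw [Nat.cast_sub hij]
        rw [h2, poch_succ, hcast]
        push_cast
        ring
      have h2 : ∑ i ∈ Finset.range (M+1),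
          (M.choose i : ℂ) * ((-1)^(i+1) * poch b (i+1) * poch (g + (i+1)) (M - i))
          = -b * poch ((g+1) - (b+1)) M := by
        rw [← ih (b+1) (g+1), Finset.mul_sum]
        apply Finset.sum_congr rfl
        intro i hi
        rw [poch_succ' b i]
        rw [show (g : ℂ) + ((i:ℂ) + 1) = (g + 1) + i by ring]
        push_cast
        ring
      have h2' : (g+1) - (b+1) = g - b := by ring
      rw [h1]
      rw [show (∑ i ∈ Finset.range (M+1),
          (M.choose i : ℂ) * ((-1)^(i+1) * poch b (i+1) * poch (g + ↑(i+1)) (M - i))) =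
          (∑ i ∈ Finset.range (M+1),
          (M.choose i : ℂ) * ((-1)^(i+1) * poch b (i+1) * poch (g + (i+1)) (M - i))) from by
        push_cast; rfl]
      rw [h2, h2', poch_succ]
      push_cast
      ring

lemma sum_triangle (f : ℕ → ℕ → ℂ) (n : ℕ) :
    ∑ j ∈ Finset.range (n+1), ∑ i ∈ Finset.range (j+1), f i (j - i)
      = ∑ d ∈ Finset.range (n+1), ∑ i ∈ Finset.range (n+1-d), f i d := by
  have h1 : ∀ j, ∑ i ∈ Finset.range (j+1), f i (j-i)
      = ∑ d ∈ Finset.range (j+1), f (j-d) d := by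
    intro j
    rw [← Finset.sum_range_reflect (fun i => f i (j-i)) (j+1)]
    apply Finset.sum_congr rfl
    intro d hd
    rw [Finset.mem_range] at hd
    have e1 : j + 1 - 1 - d = j - d := by omega
    have e2 : j - (j - d) = d := by omega
    rw [e1, e2]
  simp_rw [h1]
  simp_rw [Finset.range_eq_Ico]
  rw [← Finset.sum_Ico_Ico_comm 0 (n+1) (fun d j => f (j - d) d)]
  apply Finset.sum_congr rfl
  intro d hd
  rw [Finset.mem_Ico] at hd
  rw [Finset.sum_Ico_eq_sum_range, ← Finset.range_eq_Ico]
  apply Finset.sum_congr rfl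
  intro l hl
  congr 1
  omega

lemma hasSum_binomialC {a c : ℝ} (ha : 0 < a) (hc0 : 0 < c) (hc1 : c < 1) :
    HasSum (fun k : ℕ => poch (a:ℂ) k * (c:ℂ) ^ k / (Nat.factorial k : ℂ))
      ((((1 - c) ^ (-a) : ℝ)) : ℂ) := by
  have h := (hasSum_binomial ha hc0 hc1).mapL Complex.ofRealCLM
  refine h.congr_fun fun k => ?_
  simp only [Complex.ofRealCLM_apply]
  rw [poch_ofReal]
  push_cast
  ring

lemma hasSum_shift {c : ℝ} (hc0 : 0 < c) (hc1 : c < 1) {a : ℝ} (ha : 0 < a) (m : ℕ) :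
    HasSum (fun x : ℕ => poch (-(x:ℂ)) m * poch (a:ℂ) x * (c:ℂ) ^ x / (Nat.factorial x : ℂ))
      ((-1)^m * poch (a:ℂ) m * (c:ℂ)^m * (((1 - c) ^ (-(a + m)) : ℝ) : ℂ)) := by
  set f : ℕ → ℂ :=
    fun x => poch (-(x:ℂ)) m * poch (a:ℂ) x * (c:ℂ) ^ x / (Nat.factorial x : ℂ) with hf
  have hbin := hasSum_binomialC (show (0:ℝ) < a + m by positivity) hc0 hc1
  have hK := hbin.mul_left ((-1:ℂ)^m * poch (a:ℂ) m * (c:ℂ)^m)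
  have hshift : ∀ y : ℕ, f (y + m)
      = ((-1:ℂ)^m * poch (a:ℂ) m * (c:ℂ)^m)
        * (poch ((a + m : ℝ):ℂ) y * (c:ℂ) ^ y / (Nat.factorial y : ℂ)) := by
    intro y
    rw [hf]
    simp only
    have hdf : (((y+m).descFactorial m : ℕ) : ℂ) * (Nat.factorial y : ℂ)
        = (Nat.factorial (y+m) : ℂ) := by
      norm_cast
      rw [Nat.descFactorial_eq_factorial_mul_choose]
      have := Nat.choose_mul_factorial_mul_factorial (Nat.le_add_left m y)
      rw [Nat.add_sub_cancel] at this
      rw [← this]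
      ring
    have hpn : poch (-((y+m : ℕ):ℂ)) m = (-1)^m * (((y+m).descFactorial m : ℕ) : ℂ) :=
      poch_neg_nat (y+m) m
    have hpa : poch (a:ℂ) (y+m) = poch (a:ℂ) m * poch ((a:ℂ) + m) y := by
      rw [show y + m = m + y by ring, poch_add]
    have hca : ((a + m : ℝ) : ℂ) = (a:ℂ) + m := by push_cast; ring
    have hfz : (Nat.factorial (y+m) : ℂ) ≠ 0 := by
      exact_mod_cast Nat.cast_ne_zero.2 (Nat.factorial_ne_zero (y+m))
    have hfy : (Nat.factorial y : ℂ) ≠ 0 := by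
      exact_mod_cast Nat.cast_ne_zero.2 (Nat.factorial_ne_zero y)
    rw [hpn, hpa, hca, pow_add]
    field_simp
    rw [← hdf]
    push_cast
    ring
  have hzero : ∀ i ∈ Finset.range m, f i = 0 := by
    intro i hi
    rw [Finset.mem_range] at hi
    rw [hf]
    simp only
    rw [poch_neg_nat_eq_zero hi]
    ring
  have h2 : HasSum (fun y => f (y + m))
      (((-1:ℂ)^m * poch (a:ℂ) m * (c:ℂ)^m) * (((1 - c) ^ (-(a + m)) : ℝ) : ℂ)) := by
    refine hK.congr_fun fun y => hshift y
  have hS : ∑ i ∈ Finset.range m, f i = 0 := Finset.sum_eq_zero hzero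
  refine (hasSum_nat_add_iff' m).1 ?_
  rw [hS, sub_zero]
  exact h2

noncomputable def Jval (β c : ℝ) (j k : ℕ) : ℂ :=
  ∑ i ∈ Finset.range (j+1),
    (j.choose i : ℂ) * poch (-(k:ℂ)) (j-i) * ((-1:ℂ)^k * poch (β:ℂ) k * (c:ℂ)^k)
      * ((-1:ℂ)^i * poch ((β + k : ℝ):ℂ) i * (c:ℂ)^i
          * (((1-c) ^ (-(β + (k:ℝ) + (i:ℝ))) : ℝ):ℂ))

lemma hasSum_J {c β : ℝ} (hc0 : 0 < c) (hc1 : c < 1) (hβ : 0 < β) (j k : ℕ) :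
    HasSum (fun x : ℕ =>
        poch (-(x:ℂ)) j * poch (-(x:ℂ)) k * poch (β:ℂ) x * (c:ℂ)^x / (Nat.factorial x : ℂ))
      (Jval β c j k) := by
  set f : ℕ → ℂ := fun x =>
      poch (-(x:ℂ)) j * poch (-(x:ℂ)) k * poch (β:ℂ) x * (c:ℂ)^x / (Nat.factorial x : ℂ)
    with hf
  have hβk : (0:ℝ) < β + k := by positivity
  have hba : ∀ i : ℕ, -(β + (k:ℝ) + (i:ℝ)) = -((β + (k:ℝ)) + (i:ℝ)) := by intro i; ring
  have hsh : ∀ i : ℕ, HasSum (fun y : ℕ =>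
      ((j.choose i : ℂ) * poch (-(k:ℂ)) (j-i) * ((-1:ℂ)^k * poch (β:ℂ) k * (c:ℂ)^k))
        * (poch (-(y:ℂ)) i * poch ((β + k : ℝ):ℂ) y * (c:ℂ)^y / (Nat.factorial y : ℂ)))
      ((j.choose i : ℂ) * poch (-(k:ℂ)) (j-i) * ((-1:ℂ)^k * poch (β:ℂ) k * (c:ℂ)^k)
        * ((-1:ℂ)^i * poch ((β + k : ℝ):ℂ) i * (c:ℂ)^i
          * (((1-c) ^ (-(β + (k:ℝ) + (i:ℝ))) : ℝ):ℂ))) := by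
    intro i
    have h := (hasSum_shift hc0 hc1 hβk i).mul_left
      ((j.choose i : ℂ) * poch (-(k:ℂ)) (j-i) * ((-1:ℂ)^k * poch (β:ℂ) k * (c:ℂ)^k))
    exact h
  have hsum := hasSum_sum (f := fun (i : ℕ) (y : ℕ) =>
      ((j.choose i : ℂ) * poch (-(k:ℂ)) (j-i) * ((-1:ℂ)^k * poch (β:ℂ) k * (c:ℂ)^k))
        * (poch (-(y:ℂ)) i * poch ((β + k : ℝ):ℂ) y * (c:ℂ)^y / (Nat.factorial y : ℂ)))
    (s := Finset.range (j+1)) (fun i _ => hsh i)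
  have hshift : ∀ y : ℕ, f (y + k) = ∑ i ∈ Finset.range (j+1),
      ((j.choose i : ℂ) * poch (-(k:ℂ)) (j-i) * ((-1:ℂ)^k * poch (β:ℂ) k * (c:ℂ)^k))
        * (poch (-(y:ℂ)) i * poch ((β + k : ℝ):ℂ) y * (c:ℂ)^y / (Nat.factorial y : ℂ)) := by
    intro y
    rw [hf]
    simp only
    have hcast : (-((y + k : ℕ):ℂ)) = (-(y:ℂ)) + (-(k:ℂ)) := by push_cast; ring
    have hvdm : poch (-((y + k : ℕ):ℂ)) j
        = ∑ i ∈ Finset.range (j+1), (j.choose i : ℂ)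
            * (poch (-(y:ℂ)) i * poch (-(k:ℂ)) (j-i)) := by
      rw [hcast, poch_vandermonde]
    have hdf : (((y+k).descFactorial k : ℕ) : ℂ) * (Nat.factorial y : ℂ)
        = (Nat.factorial (y+k) : ℂ) := by
      norm_cast
      rw [Nat.descFactorial_eq_factorial_mul_choose]
      have := Nat.choose_mul_factorial_mul_factorial (Nat.le_add_left k y)
      rw [Nat.add_sub_cancel] at this
      rw [← this]
      ring
    have hpn : poch (-((y+k : ℕ):ℂ)) k = (-1)^k * (((y+k).descFactorial k : ℕ) : ℂ) :=
      poch_neg_nat (y+k) k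
    have hpa : poch (β:ℂ) (y+k) = poch (β:ℂ) k * poch ((β:ℂ) + k) y := by
      rw [show y + k = k + y by ring, poch_add]
    have hca : ((β + k : ℝ) : ℂ) = (β:ℂ) + k := by push_cast; ring
    have hfz : (Nat.factorial (y+k) : ℂ) ≠ 0 :=
      Nat.cast_ne_zero.2 (Nat.factorial_ne_zero (y+k))
    have hfy : (Nat.factorial y : ℂ) ≠ 0 :=
      Nat.cast_ne_zero.2 (Nat.factorial_ne_zero y)
    rw [hvdm, hpn, hpa, hca, pow_add, Finset.sum_mul, Finset.sum_mul, Finset.sum_mul, Finset.sum_div]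
    apply Finset.sum_congr rfl
    intro i _
    field_simp
    rw [← hdf]
    push_cast
    ring
  have h2 : HasSum (fun y => f (y + k)) (Jval β c j k) := by
    rw [Jval]
    exact hsum.congr_fun fun y => hshift y
  have hzero : ∀ i ∈ Finset.range k, f i = 0 := by
    intro i hi
    rw [Finset.mem_range] at hi
    rw [hf]
    simp only
    rw [poch_neg_nat_eq_zero hi]
    ring
  have hS : ∑ i ∈ Finset.range k, f i = 0 := Finset.sum_eq_zero hzero
  refine (hasSum_nat_add_iff' k).1 ?_
  rw [hS, sub_zero]
  exact h2

lemma chu_vandermonde_div {g : ℝ} (hg : 0 < g) (b : ℂ) (M : ℕ) :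
    ∑ i ∈ Finset.range (M+1),
        poch (-(M:ℂ)) i * poch b i / (poch ((g:ℝ):ℂ) i * (Nat.factorial i : ℂ))
      = poch (((g:ℝ):ℂ) - b) M / poch ((g:ℝ):ℂ) M := by
  rw [← chu_vandermonde b ((g:ℝ):ℂ) M, Finset.sum_div]
  apply Finset.sum_congr rfl
  intro i hi
  rw [Finset.mem_range] at hi
  have hiM : i ≤ M := by omega
  have h1 : poch ((g:ℝ):ℂ) M = poch ((g:ℝ):ℂ) i * poch (((g:ℝ):ℂ) + i) (M - i) := by
    rw [← poch_add, Nat.add_sub_cancel' hiM]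
  have h2 : poch (-(M:ℂ)) i = (-1)^i * (M.choose i : ℂ) * (Nat.factorial i : ℂ) := by
    rw [poch_neg_nat, Nat.descFactorial_eq_factorial_mul_choose]
    push_cast
    ring
  have hgi : poch ((g:ℝ):ℂ) i ≠ 0 := poch_ne_zero_of_re_pos (by simp [hg]) i
  have hgM : poch ((g:ℝ):ℂ) M ≠ 0 := poch_ne_zero_of_re_pos (by simp [hg]) M
  have hfi : (Nat.factorial i : ℂ) ≠ 0 := Nat.cast_ne_zero.2 (Nat.factorial_ne_zero i)
  have hgiM : poch (((g:ℝ):ℂ) + i) (M - i) ≠ 0 := by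
    apply poch_ne_zero_of_re_pos
    simp only [Complex.add_re, Complex.ofReal_re, Complex.natCast_re]
    positivity
  rw [h2, h1]
  field_simp

lemma sum_choose_pow (R : ℂ) (n : ℕ) :
    ∑ d ∈ Finset.range (n+1), (n.choose d : ℂ) * R^d = (R + 1)^n := by
  rw [add_pow]
  apply Finset.sum_congr rfl
  intro d _
  rw [one_pow]
  ring

noncomputable def coefB (β c : ℝ) (n j : ℕ) : ℂ :=
  poch (-(n:ℂ)) j * (1 - 1/(c:ℂ))^j / (poch (β:ℂ) j * (Nat.factorial j : ℂ))

lemma div_rearrange (K e a b ch fi fd q1 q2 p1 p2 R : ℂ)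
    (hch : ch ≠ 0) (hfi : fi ≠ 0) (hfd : fd ≠ 0) (hq1 : q1 ≠ 0) (hq2 : q2 ≠ 0) :
    K * (e * (a * b) * ch / ((q1 * q2) * (ch * fi * fd)) * p1 * p2 * R)
      = (K * (e * a) * p1 * R / (q1 * fd)) * (b * p2 / (q2 * fi)) := by
  field_simp

lemma div_rearrange2 (K e ch fd q1 q2 p1 p2 R : ℂ)
    (he : e * e = 1) (hfd : fd ≠ 0) (hq1 : q1 ≠ 0) (hq2 : q2 ≠ 0) :
    (K * (e * (e * ch * fd)) * p1 * R / (q1 * fd)) * (p2 / q2)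
      = K * ch * R * (p1 * p2) / (q1 * q2) := by
  have h1 : K * (e * (e * ch * fd)) * p1 * R = K * ch * fd * p1 * R := by
    linear_combination (K * ch * fd * p1 * R) * he
  rw [h1, div_mul_div_comm, div_eq_div_iff (mul_ne_zero (mul_ne_zero hq1 hfd) hq2)
    (mul_ne_zero hq1 hq2)]
  ring

lemma pow_claim {U C : ℂ} (hU : U ≠ 0) (hC : C ≠ 0) (E : ℂ) (i m : ℕ) :
    (-(U/C))^(i+m) * C^i * (E * (U^i)⁻¹) * (-1:ℂ)^i = E * (U/C)^m * (-1:ℂ)^m := by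
  have h4 : (-(U/C))^i * (-1:ℂ)^i = (U/C)^i := by
    rw [← mul_pow]
    norm_num
  have h5 : (-(U/C))^m = (-1:ℂ)^m * (U/C)^m := by rw [neg_pow]
  have h6 : (U/C)^i * C^i * (U^i)⁻¹ = 1 := by
    rw [div_pow]
    field_simp
  rw [pow_add, h5]
  linear_combination ((-1:ℂ)^m * (U/C)^m * C^i * E * (U^i)⁻¹) * h4
    + ((-1:ℂ)^m * (U/C)^m * E) * h6

noncomputable def Tm (β c : ℝ) (n k i d : ℕ) : ℂ :=
  ((-1:ℂ)^k * poch (β:ℂ) k * (c:ℂ)^k * (((1-c) ^ (-(β + (k:ℝ))) : ℝ):ℂ))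
    * ((-1:ℂ)^d * poch (-(n:ℂ)) (i+d) * (((i+d).choose i : ℕ) : ℂ)
      / (poch (β:ℂ) (i+d) * (Nat.factorial (i+d) : ℂ))
      * poch (-(k:ℂ)) d * poch ((β:ℂ) + (k:ℂ)) i * (((1-c : ℝ):ℂ) / (c:ℂ))^d)

set_option maxHeartbeats 1000000 in
lemma Wsum {c β : ℝ} (hc0 : 0 < c) (hc1 : c < 1) (hβ : 0 < β) (n k : ℕ) :
    ∑ j ∈ Finset.range (n+1), coefB β c n j * Jval β c j k
      = (-1)^k * poch (β:ℂ) k * (c:ℂ)^k * (((1-c) ^ (-(β + (k:ℝ))) : ℝ):ℂ)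
          * poch (-(k:ℂ)) n / (poch (β:ℂ) n * (c:ℂ)^n) := by
  have hc0' : (c:ℂ) ≠ 0 := Complex.ofReal_ne_zero.2 hc0.ne'
  have hu0 : (0:ℝ) < 1 - c := by linarith
  have hu0' : ((1-c : ℝ):ℂ) ≠ 0 := Complex.ofReal_ne_zero.2 hu0.ne'
  have step1 : ∑ j ∈ Finset.range (n+1), coefB β c n j * Jval β c j k
      = ∑ j ∈ Finset.range (n+1), ∑ i ∈ Finset.range (j+1), Tm β c n k i (j - i) := by
    apply Finset.sum_congr rfl
    intro j _
    rw [coefB, Jval, Finset.mul_sum]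
    apply Finset.sum_congr rfl
    intro i hi
    rw [Finset.mem_range] at hi
    obtain ⟨m, rfl⟩ : ∃ m, j = i + m := ⟨j - i, by omega⟩
    simp only [Nat.add_sub_cancel_left, Tm]
    have hcast : ((β + (k:ℝ) : ℝ):ℂ) = (β:ℂ) + (k:ℂ) := by push_cast; ring
    have hEi : (((1-c) ^ (-(β + (k:ℝ) + (i:ℝ))) : ℝ):ℂ)
        = (((1-c) ^ (-(β + (k:ℝ))) : ℝ):ℂ) * ((((1-c) : ℝ):ℂ) ^ i)⁻¹ := by
      have h0 : (1-c) ^ (-(β + (k:ℝ) + (i:ℝ)))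
          = (1-c) ^ (-(β + (k:ℝ))) * ((1-c)^(i:ℕ))⁻¹ := by
        rw [show -(β + (k:ℝ) + (i:ℝ)) = -(β + (k:ℝ)) + -(i:ℝ) by ring,
          Real.rpow_add hu0]
        congr 1
        rw [Real.rpow_neg hu0.le, Real.rpow_natCast]
      rw [h0]
      push_cast
      ring
    have ht : (1 - 1/(c:ℂ)) = -(((1-c : ℝ):ℂ) / (c:ℂ)) := by
      push_cast
      field_simp
      ring
    have claim : (1 - 1/(c:ℂ))^(i+m) * (c:ℂ)^i
          * (((1-c) ^ (-(β + (k:ℝ) + (i:ℝ))) : ℝ):ℂ) * (-1:ℂ)^i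
        = (((1-c) ^ (-(β + (k:ℝ))) : ℝ):ℂ) * (((1-c : ℝ):ℂ) / (c:ℂ))^m * (-1:ℂ)^m := by
      rw [hEi, ht]
      exact pow_claim hu0' hc0' _ i m
    rw [hcast]
    linear_combination (poch (-(n:ℂ)) (i+m) * (((i+m).choose i : ℕ) : ℂ) * poch (-(k:ℂ)) m
      * poch ((β:ℂ)+(k:ℂ)) i * poch (β:ℂ) k * (c:ℂ)^k * (-1:ℂ)^k
      / (poch (β:ℂ) (i+m) * ((Nat.factorial (i+m)) : ℂ))) * claim
  rw [step1, sum_triangle (Tm β c n k) n]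
  have step2 : ∀ d ∈ Finset.range (n+1),
      (∑ i ∈ Finset.range (n+1-d), Tm β c n k i d)
      = ((-1:ℂ)^k * poch (β:ℂ) k * (c:ℂ)^k * (((1-c) ^ (-(β + (k:ℝ))) : ℝ):ℂ))
          * ((n.choose d : ℕ) : ℂ) * (((1-c : ℝ):ℂ) / (c:ℂ))^d * poch (-(k:ℂ)) n
          / poch (β:ℂ) n := by
    intro d hd
    rw [Finset.mem_range] at hd
    have hdn : d ≤ n := by omega
    obtain ⟨M, hdM⟩ : ∃ M, d + M = n := ⟨n - d, by omega⟩
    have hMd : n + 1 - d = M + 1 := by omega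
    rw [hMd]
    have hβd : (0:ℝ) < β + d := by positivity
    have hper : ∀ i ∈ Finset.range (M+1), Tm β c n k i d
        = ((((-1:ℂ)^k * poch (β:ℂ) k * (c:ℂ)^k * (((1-c) ^ (-(β + (k:ℝ))) : ℝ):ℂ)))
            * ((-1:ℂ)^d * poch (-(n:ℂ)) d) * poch (-(k:ℂ)) d
            * (((1-c : ℝ):ℂ) / (c:ℂ))^d
            / (poch (β:ℂ) d * (Nat.factorial d : ℂ)))
          * (poch (-(M:ℂ)) i * poch ((β:ℂ) + (k:ℂ)) i
              / (poch (((β + d : ℝ)):ℂ) i * (Nat.factorial i : ℂ))) := by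
      intro i _
      rw [Tm]
      have h1 : poch (-(n:ℂ)) (i+d) = poch (-(n:ℂ)) d * poch (-(M:ℂ)) i := by
        rw [show i + d = d + i by ring, poch_add]
        congr 2
        have hM : (M:ℂ) = (n:ℂ) - d := by
          rw [← hdM]
          push_cast
          ring
        rw [hM]
        ring
      have h2 : poch (β:ℂ) (i+d) = poch (β:ℂ) d * poch (((β + d : ℝ)):ℂ) i := by
        rw [show i + d = d + i by ring, poch_add]
        congr 2
        push_cast
        ring
      have h3 : (Nat.factorial (i+d) : ℂ) = (((i+d).choose i : ℕ) : ℂ)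
          * (Nat.factorial i : ℂ) * (Nat.factorial d : ℂ) := by
        norm_cast
        rw [← Nat.choose_mul_factorial_mul_factorial (Nat.le_add_right i d),
          Nat.add_sub_cancel_left]
      have hne1 : poch (β:ℂ) d ≠ 0 := poch_ne_zero_of_re_pos (by simp [hβ]) _
      have hne2 : poch (((β + d : ℝ)):ℂ) i ≠ 0 := poch_ne_zero_of_re_pos (by simp [hβd]) _
      have hne3 : (Nat.factorial i : ℂ) ≠ 0 := Nat.cast_ne_zero.2 (Nat.factorial_ne_zero _)
      have hne4 : (Nat.factorial d : ℂ) ≠ 0 := Nat.cast_ne_zero.2 (Nat.factorial_ne_zero _)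
      have hne5 : (((i+d).choose i : ℕ) : ℂ) ≠ 0 :=
        Nat.cast_ne_zero.2 (Nat.choose_pos (Nat.le_add_right i d)).ne'
      have hne6 : (((d+i).choose i : ℕ) : ℂ) ≠ 0 :=
        Nat.cast_ne_zero.2 (Nat.choose_pos (Nat.le_add_left i d)).ne'
      rw [h1, h2, h3]
      exact div_rearrange _ _ _ _ _ _ _ _ _ _ _ _ hne5 hne3 hne4 hne1 hne2
    rw [Finset.sum_congr rfl hper, ← Finset.mul_sum,
      chu_vandermonde_div hβd ((β:ℂ) + (k:ℂ)) M]
    have e1 : (((β + d : ℝ)):ℂ) - ((β:ℂ) + (k:ℂ)) = (-(k:ℂ)) + d := by push_cast; ring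
    have e2 : poch (-(k:ℂ)) d * poch ((-(k:ℂ)) + d) M = poch (-(k:ℂ)) n := by
      rw [← poch_add, hdM]
    have e3 : poch (β:ℂ) d * poch (((β + d : ℝ)):ℂ) M = poch (β:ℂ) n := by
      have hh : poch (((β + d : ℝ)):ℂ) M = poch ((β:ℂ) + d) M := by
        congr 1
        push_cast
        ring
      rw [hh, ← poch_add, hdM]
    have e4 : poch (-(n:ℂ)) d = (-1)^d * ((n.choose d : ℕ) : ℂ) * (Nat.factorial d : ℂ) := by
      rw [poch_neg_nat, Nat.descFactorial_eq_factorial_mul_choose]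
      push_cast
      ring
    have hne1 : poch (β:ℂ) d ≠ 0 := poch_ne_zero_of_re_pos (by simp [hβ]) _
    have hne2 : poch (((β + d : ℝ)):ℂ) M ≠ 0 := poch_ne_zero_of_re_pos (by simp [hβd]) _
    have hne4 : (Nat.factorial d : ℂ) ≠ 0 := Nat.cast_ne_zero.2 (Nat.factorial_ne_zero _)
    have hne5 : poch (β:ℂ) n ≠ 0 := poch_ne_zero_of_re_pos (by simp [hβ]) _
    rw [e1, e4, ← e2, ← e3]
    exact div_rearrange2 _ _ _ _ _ _ _ _ _
      (by rw [← pow_add]; exact Even.neg_one_pow ⟨d, by ring⟩) hne4 hne1 hne2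
  rw [Finset.sum_congr rfl step2]
  have hfin : ∑ d ∈ Finset.range (n+1),
      ((-1:ℂ)^k * poch (β:ℂ) k * (c:ℂ)^k * (((1-c) ^ (-(β + (k:ℝ))) : ℝ):ℂ))
        * ((n.choose d : ℕ) : ℂ) * (((1-c : ℝ):ℂ) / (c:ℂ))^d * poch (-(k:ℂ)) n
        / poch (β:ℂ) n
      = (((-1:ℂ)^k * poch (β:ℂ) k * (c:ℂ)^k * (((1-c) ^ (-(β + (k:ℝ))) : ℝ):ℂ))
          * poch (-(k:ℂ)) n / poch (β:ℂ) n)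
        * ∑ d ∈ Finset.range (n+1), ((n.choose d : ℕ) : ℂ) * (((1-c : ℝ):ℂ) / (c:ℂ))^d := by
    rw [Finset.mul_sum]
    apply Finset.sum_congr rfl
    intro d _
    ring
  rw [hfin, sum_choose_pow]
  have hR1 : (((1-c : ℝ):ℂ) / (c:ℂ)) + 1 = ((c:ℂ))⁻¹ := by
    field_simp
    push_cast
    ring
  rw [hR1]
  have hcn : (c:ℂ)^n ≠ 0 := pow_ne_zero _ hc0'
  have hne5 : poch (β:ℂ) n ≠ 0 := poch_ne_zero_of_re_pos (by simp [hβ]) _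
  rw [inv_pow]
  field_simp

lemma delta_sum {n p : ℕ} (hpn : p ≤ n) :
    ∑ k ∈ Finset.range (p+1), poch (-(p:ℂ)) k * poch (-(k:ℂ)) n / (Nat.factorial k : ℂ)
      = if n = p then ((Nat.factorial n : ℕ) : ℂ) else 0 := by
  rcases eq_or_lt_of_le hpn with h | h
  · subst h
    rw [if_pos rfl]
    rw [Finset.sum_eq_single_of_mem p (Finset.self_mem_range_succ p)]
    · rw [poch_neg_nat_self]
      have hf : (Nat.factorial p : ℂ) ≠ 0 := Nat.cast_ne_zero.2 (Nat.factorial_ne_zero _)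
      have hsgn : ((-1:ℂ))^p * ((-1:ℂ))^p = 1 := by
        rw [← pow_add]
        exact Even.neg_one_pow ⟨p, by ring⟩
      have h2 : ((-1:ℂ)^p * (Nat.factorial p : ℂ)) * ((-1:ℂ)^p * (Nat.factorial p : ℂ))
          = (Nat.factorial p : ℂ) * (Nat.factorial p : ℂ) := by
        linear_combination ((Nat.factorial p : ℂ) * (Nat.factorial p : ℂ)) * hsgn
      rw [h2]
      field_simp
    · intro k hk hne
      rw [Finset.mem_range] at hk
      rw [poch_neg_nat_eq_zero (show k < p by omega)]
      ring
  · rw [if_neg (by omega)]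
    apply Finset.sum_eq_zero
    intro k hk
    rw [Finset.mem_range] at hk
    rw [poch_neg_nat_eq_zero (show k < n by omega)]
    ring

lemma gamma_poch {β : ℝ} (hβ : 0 < β) (x : ℕ) :
    Complex.Gamma ((x:ℂ) + (β:ℂ)) = Complex.Gamma (β:ℂ) * poch (β:ℂ) x := by
  induction x with
  | zero => simp [poch_zero]
  | succ x ih =>
      have h1 : (((x+1:ℕ)):ℂ) + β = ((x:ℂ) + β) + 1 := by push_cast; ring
      have h2 : ((x:ℂ) + (β:ℂ)) ≠ 0 := by
        have hre : (0:ℝ) < ((x:ℂ) + (β:ℂ)).re := by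
          simp only [Complex.add_re, Complex.natCast_re, Complex.ofReal_re]
          positivity
        intro h
        rw [h] at hre
        simp at hre
      rw [h1, Complex.Gamma_add_one _ h2, ih, poch_succ]
      ring

lemma weight_eq {c β : ℝ} (hβ : 0 < β) (x : ℕ) :
    weight β c ((x:ℕ):ℂ)
      = Complex.Gamma (β:ℂ) * (poch (β:ℂ) x * (c:ℂ)^x / (Nat.factorial x : ℂ)) := by
  rw [weight, Complex.cpow_natCast, gamma_poch hβ, Complex.Gamma_nat_eq_factorial]
  ring

lemma term_expand {c β : ℝ} (hβ : 0 < β) (n p x : ℕ) :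
    meixnerMonic β c n (x:ℂ) * meixnerMonic β c p (x:ℂ) * weight β c (x:ℂ)
      = ((1 - 1/(c:ℂ))^(-(n:ℤ)) * (1 - 1/(c:ℂ))^(-(p:ℤ)) * poch (β:ℂ) n * poch (β:ℂ) p
          * Complex.Gamma (β:ℂ))
        * ∑ j ∈ Finset.range (n+1), ∑ k ∈ Finset.range (p+1),
            (coefB β c n j * coefB β c p k)
              * (poch (-(x:ℂ)) j * poch (-(x:ℂ)) k * poch (β:ℂ) x * (c:ℂ)^x
                  / (Nat.factorial x : ℂ)) := by
  have hs : ∀ m : ℕ, (∑ k ∈ Finset.range (m + 1),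
      poch (-(m : ℂ)) k * poch (-(x:ℂ)) k / (poch (β:ℂ) k * (Nat.factorial k : ℂ))
        * (1 - 1 / (c:ℂ)) ^ k)
      = ∑ k ∈ Finset.range (m + 1), coefB β c m k * poch (-(x:ℂ)) k := by
    intro m
    apply Finset.sum_congr rfl
    intro k _
    rw [coefB]
    ring
  rw [meixnerMonic, meixnerMonic, meixner, meixner, weight_eq hβ x, hs n, hs p]
  rw [show ((1 - 1/(c:ℂ))^(-(n:ℤ)) * ((poch (β:ℂ) n)
        * (∑ k ∈ Finset.range (n + 1), coefB β c n k * poch (-(x:ℂ)) k)))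
      * ((1 - 1/(c:ℂ))^(-(p:ℤ)) * ((poch (β:ℂ) p)
        * (∑ k ∈ Finset.range (p + 1), coefB β c p k * poch (-(x:ℂ)) k)))
      * (Complex.Gamma (β:ℂ) * (poch (β:ℂ) x * (c:ℂ)^x / (Nat.factorial x : ℂ)))
      = ((1 - 1/(c:ℂ))^(-(n:ℤ)) * (1 - 1/(c:ℂ))^(-(p:ℤ)) * poch (β:ℂ) n * poch (β:ℂ) p
          * Complex.Gamma (β:ℂ))
        * ((poch (β:ℂ) x * (c:ℂ)^x / (Nat.factorial x : ℂ))
          * ((∑ k ∈ Finset.range (n + 1), coefB β c n k * poch (-(x:ℂ)) k)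
            * (∑ k ∈ Finset.range (p + 1), coefB β c p k * poch (-(x:ℂ)) k))) from by ring]
  congr 1
  rw [Finset.sum_mul_sum, Finset.mul_sum]
  apply Finset.sum_congr rfl
  intro j _
  rw [Finset.mul_sum]
  apply Finset.sum_congr rfl
  intro k _
  ring

lemma div_rearrange3 (a t e q f C E b D Eb : ℂ)
    (hq : q ≠ 0) (hf : f ≠ 0) (hD : D ≠ 0)
    (key : t * C * E * e = Eb) :
    (a * t / (q * f)) * (e * q * C * E * b / D) = (a * b / f) * (Eb / D) := by
  have h1 : (a * t / (q * f)) * (e * q * C * E * b / D)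
      = (a * b / f) * ((t * C * E * e) / D) := by
    field_simp
  rw [h1, key]

theorem aux_orth (c β : ℝ) (hc0 : 0 < c) (hc1 : c < 1) (hβ : 0 < β)
    (n p : ℕ) (hpn : p ≤ n) :
    HasSum
      (fun k : ℕ => meixnerMonic β c n (k : ℂ) * meixnerMonic β c p (k : ℂ) * weight β c (k : ℂ))
      (if n = p then ((1 / gammaSq β c n : ℝ) : ℂ) else 0) := by
  have hc0' : (c:ℂ) ≠ 0 := Complex.ofReal_ne_zero.2 hc0.ne'
  have hu0 : (0:ℝ) < 1 - c := by linarith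
  have hu0' : ((1-c : ℝ):ℂ) ≠ 0 := Complex.ofReal_ne_zero.2 hu0.ne'
  have ht : (1 - 1/(c:ℂ)) = -(((1-c : ℝ):ℂ) / (c:ℂ)) := by
    push_cast
    field_simp
    ring
  set CC : ℂ := (1 - 1/(c:ℂ))^(-(n:ℤ)) * (1 - 1/(c:ℂ))^(-(p:ℤ)) * poch (β:ℂ) n
    * poch (β:ℂ) p * Complex.Gamma (β:ℂ) with hCC
  -- the HasSum with the double-sum value
  have h1 : HasSum
      (fun x : ℕ => ∑ j ∈ Finset.range (n+1), ∑ k ∈ Finset.range (p+1),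
        (coefB β c n j * coefB β c p k)
          * (poch (-(x:ℂ)) j * poch (-(x:ℂ)) k * poch (β:ℂ) x * (c:ℂ)^x
              / (Nat.factorial x : ℂ)))
      (∑ j ∈ Finset.range (n+1), ∑ k ∈ Finset.range (p+1),
        (coefB β c n j * coefB β c p k) * Jval β c j k) := by
    apply hasSum_sum
    intro j _
    apply hasSum_sum
    intro k _
    exact (hasSum_J hc0 hc1 hβ j k).mul_left _
  have h2 := h1.mul_left CC
  have h3 : HasSum
      (fun x : ℕ => meixnerMonic β c n (x : ℂ) * meixnerMonic β c p (x : ℂ) * weight β c (x : ℂ))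
      (CC * ∑ j ∈ Finset.range (n+1), ∑ k ∈ Finset.range (p+1),
        (coefB β c n j * coefB β c p k) * Jval β c j k) := by
    refine h2.congr_fun fun x => ?_
    rw [term_expand hβ n p x, hCC]
  -- compute the value
  have hv1 : (∑ j ∈ Finset.range (n+1), ∑ k ∈ Finset.range (p+1),
        (coefB β c n j * coefB β c p k) * Jval β c j k)
      = ∑ k ∈ Finset.range (p+1), coefB β c p k
          * ∑ j ∈ Finset.range (n+1), coefB β c n j * Jval β c j k := by
    rw [Finset.sum_comm]
    apply Finset.sum_congr rfl
    intro k _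
    rw [Finset.mul_sum]
    apply Finset.sum_congr rfl
    intro j _
    ring
  have hv2 : ∀ k ∈ Finset.range (p+1),
      coefB β c p k * (∑ j ∈ Finset.range (n+1), coefB β c n j * Jval β c j k)
      = (poch (-(p:ℂ)) k * poch (-(k:ℂ)) n / (Nat.factorial k : ℂ))
          * ((((1-c) ^ (-β) : ℝ):ℂ) / (poch (β:ℂ) n * (c:ℂ)^n)) := by
    intro k _
    rw [Wsum hc0 hc1 hβ n k, coefB]
    have hEk : (((1-c) ^ (-(β + (k:ℝ))) : ℝ):ℂ)
        = (((1-c) ^ (-β) : ℝ):ℂ) * ((((1-c) : ℝ):ℂ) ^ k)⁻¹ := by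
      have h0 : (1-c) ^ (-(β + (k:ℝ)))
          = (1-c) ^ (-β) * ((1-c)^(k:ℕ))⁻¹ := by
        rw [show -(β + (k:ℝ)) = -β + -(k:ℝ) by ring, Real.rpow_add hu0]
        congr 1
        rw [Real.rpow_neg hu0.le, Real.rpow_natCast]
      rw [h0]
      push_cast
      ring
    have key : (1 - 1/(c:ℂ))^k * (c:ℂ)^k * (((1-c) ^ (-(β + (k:ℝ))) : ℝ):ℂ) * (-1:ℂ)^k
        = (((1-c) ^ (-β) : ℝ):ℂ) := by
      have h := pow_claim hu0' hc0' ((((1-c) ^ (-β) : ℝ):ℂ)) k 0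
      rw [Nat.add_zero, pow_zero, pow_zero, mul_one, mul_one] at h
      rw [hEk, ht]
      exact h
    have hqk : poch (β:ℂ) k ≠ 0 := poch_ne_zero_of_re_pos (by simp [hβ]) _
    have hfk : (Nat.factorial k : ℂ) ≠ 0 := Nat.cast_ne_zero.2 (Nat.factorial_ne_zero _)
    have hDn : poch (β:ℂ) n * (c:ℂ)^n ≠ 0 :=
      mul_ne_zero (poch_ne_zero_of_re_pos (by simp [hβ]) _) (pow_ne_zero _ hc0')
    exact div_rearrange3 (poch (-(p:ℂ)) k) ((1 - 1/(c:ℂ))^k) ((-1:ℂ)^k)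
      (poch (β:ℂ) k) (Nat.factorial k : ℂ) ((c:ℂ)^k)
      ((((1-c) ^ (-(β + (k:ℝ))) : ℝ):ℂ)) (poch (-(k:ℂ)) n)
      (poch (β:ℂ) n * (c:ℂ)^n) ((((1-c) ^ (-β) : ℝ):ℂ)) hqk hfk hDn key
  have hv3 : (∑ k ∈ Finset.range (p+1), coefB β c p k
        * ∑ j ∈ Finset.range (n+1), coefB β c n j * Jval β c j k)
      = (if n = p then ((Nat.factorial n : ℕ) : ℂ) else 0)
          * ((((1-c) ^ (-β) : ℝ):ℂ) / (poch (β:ℂ) n * (c:ℂ)^n)) := by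
    rw [Finset.sum_congr rfl hv2, ← Finset.sum_mul, delta_sum hpn]
  rw [hv1, hv3] at h3
  by_cases hnp : n = p
  · subst hnp
    rw [if_pos rfl] at h3 ⊢
    convert h3 using 1
    have hz : (1 - 1/(c:ℂ))^(-(n:ℤ)) = ((1 - 1/(c:ℂ))^n)⁻¹ := by
      rw [zpow_neg, zpow_natCast]
    have hz2 : (1 - 1/(c:ℂ))^(-(n:ℤ)) * (1 - 1/(c:ℂ))^(-(n:ℤ))
        = ((c:ℂ)^n * (c:ℂ)^n) / ((((1-c:ℝ):ℂ))^n * (((1-c:ℝ):ℂ))^n) := by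
      rw [hz, ← mul_inv, ← mul_pow, ht,
        show (-((((1-c:ℝ):ℂ)) / (c:ℂ))) * -((((1-c:ℝ):ℂ)) / (c:ℂ))
          = ((((1-c:ℝ):ℂ)) * (((1-c:ℝ):ℂ))) / ((c:ℂ) * (c:ℂ)) from by ring,
        div_pow, mul_pow, mul_pow, inv_div]
    have hups : (1:ℂ) - (c:ℂ) ≠ 0 := by
      intro h
      apply hu0'
      push_cast
      exact h
    have hpR : ((pochR β n : ℝ):ℂ) ≠ 0 := Complex.ofReal_ne_zero.2 (pochR_pos hβ n).ne'
    have hval : CC * ((Nat.factorial n : ℕ):ℂ)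
          * ((((1-c) ^ (-β) : ℝ):ℂ) / (poch (β:ℂ) n * (c:ℂ)^n))
        = ((Real.Gamma β * pochR β n * (Nat.factorial n : ℝ) * ((1-c) ^ (-β))
            * c^n / (1-c)^(2*n) : ℝ) : ℂ) := by
      rw [hCC, hz2, poch_ofReal, Complex.Gamma_ofReal]
      push_cast
      field_simp
      ring
    have hreal : Real.Gamma β * pochR β n * (Nat.factorial n : ℝ) * ((1-c) ^ (-β))
          * c^n / (1-c)^(2*n)
        = 1 / gammaSq β c n := by
      rw [gammaSq]
      have h1 : Real.Gamma ((n:ℝ) + β) = Real.Gamma β * pochR β n := by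
        rw [add_comm]
        exact pochR_gamma hβ n
      have h2 : Real.Gamma ((n:ℝ) + 1) = (Nat.factorial n : ℝ) := by
        exact_mod_cast Real.Gamma_nat_eq_factorial n
      have h3 : (1-c) ^ (2*(n:ℝ) + β) = (1-c)^(2*n:ℕ) * (1-c)^β := by
        rw [← Real.rpow_natCast (1-c) (2*n), ← Real.rpow_add hu0]
        congr 1
        push_cast
        ring
      have h4 : (1-c) ^ (-β) = ((1-c)^β)⁻¹ := by
        rw [Real.rpow_neg hu0.le]
      rw [h1, h2, h3, h4, zpow_neg, zpow_natCast]
      have hβpos : (0:ℝ) < (1-c)^β := Real.rpow_pos_of_pos hu0 β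
      have hGpos : (0:ℝ) < Real.Gamma β := Real.Gamma_pos_of_pos hβ
      have hppos : (0:ℝ) < pochR β n := pochR_pos hβ n
      have hfpos : (0:ℝ) < (Nat.factorial n : ℝ) := by positivity
      have hcn : (0:ℝ) < c^n := by positivity
      have hun : (0:ℝ) < (1-c)^(2*n) := by positivity
      field_simp
    rw [← hreal, ← hval]
    ring
  · rw [if_neg hnp] at h3 ⊢
    simpa using h3

/-- Orthogonality of the monic Meixner polynomials:
`Σ_{k=0}^{∞} π_n(k) π_p(k) w(k) = δ_{np}/γ_n²`. -/
theorem meixnerMonic_orthogonality (c β : ℝ) (hc0 : 0 < c) (hc1 : c < 1) (hβ : 0 < β)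
    (n p : ℕ) :
    HasSum
      (fun k : ℕ => meixnerMonic β c n (k : ℂ) * meixnerMonic β c p (k : ℂ) * weight β c (k : ℂ))
      (if n = p then ((1 / gammaSq β c n : ℝ) : ℂ) else 0) := by
  rcases le_total p n with h | h
  · exact aux_orth c β hc0 hc1 hβ n p h
  · have haux := aux_orth c β hc0 hc1 hβ p n h
    by_cases hnp : n = p
    · subst hnp
      rw [if_pos rfl] at haux ⊢
      exact haux.congr_fun fun x => by ring
    · rw [if_neg (fun hh => hnp hh.symm)] at haux
      rw [if_neg hnp]
      exact haux.congr_fun fun x => by ring
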